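/- Let V be a finite-dimensional complex vector space and d, e : V → V linear maps with d∘d = 0 and e∘e = 0; set Δ := d∘e + e∘d and let V₀ := ⋃_{N≥0} ker Δ^N be the generalized 0-eigenspace of Δ. Then d(V₀) ⊆ V₀, d(V₀) ⊆ ker d ∩ V₀, and the linear map (ker d ∩ V₀)/d(V₀) → (ker d)/(range d) induced by the inclusion V₀ ⊆ V is an isomorphism. Equivalently: ker d = (ker d ∩ V₀) + range d, and (ker d ∩ V₀) ∩ range d = d(V₀). -/
import Mathlib


/-- The generalized `0`-eigenspace `V₀` of the Laplacian `Δ = d∘e + e∘d` is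
`d`-invariant and computes the cohomology of `(V, d)`:
`ker d = (ker d ∩ V₀) + range d` and `(ker d ∩ V₀) ∩ range d = d(V₀)`. -/
theorem generalized_zero_eigenspace_computes_cohomology
    {V : Type*} [AddCommGroup V] [Module ℂ V] [FiniteDimensional ℂ V]
    (d e : V →ₗ[ℂ] V) (hdd : d ∘ₗ d = 0) (hee : e ∘ₗ e = 0)
    (V0 : Submodule ℂ V)
    (hV0 : ∀ x, x ∈ V0 ↔ ∃ N : ℕ, ((d ∘ₗ e + e ∘ₗ d) ^ N) x = 0) :
    Submodule.map d V0 ≤ V0 ∧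
    Submodule.map d V0 ≤ LinearMap.ker d ⊓ V0 ∧
    LinearMap.ker d = (LinearMap.ker d ⊓ V0) ⊔ LinearMap.range d ∧
    (LinearMap.ker d ⊓ V0) ⊓ LinearMap.range d = Submodule.map d V0 := by
  set L : Module.End ℂ V := d ∘ₗ e + e ∘ₗ d with hL
  have hdd' : ∀ y, d (d y) = 0 := fun y => LinearMap.congr_fun hdd y
  -- commutation d ∘ L^n = L^n ∘ d
  have hcomm : ∀ x, d (L x) = L (d x) := by
    intro x
    simp only [hL, LinearMap.add_apply, LinearMap.comp_apply, map_add, hdd']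
    simp [hdd']
  have hpow : ∀ n x, d ((L ^ n) x) = (L ^ n) (d x) := by
    intro n
    induction n with
    | zero => simp
    | succ n ih =>
      intro x
      rw [pow_succ, Module.End.mul_apply, Module.End.mul_apply, ih (L x), hcomm x]
  -- d maps V0 into V0
  have hA : Submodule.map d V0 ≤ V0 := by
    rintro _ ⟨x, hx, rfl⟩
    obtain ⟨N, hN⟩ := (hV0 x).mp hx
    exact (hV0 (d x)).mpr ⟨N, by rw [← hpow, hN, map_zero]⟩
  have hrange_ker : LinearMap.range d ≤ LinearMap.ker d := by
    rintro _ ⟨x, rfl⟩; exact hdd' x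
  have hB : Submodule.map d V0 ≤ LinearMap.ker d ⊓ V0 := by
    rintro z hz
    exact ⟨hrange_ker (LinearMap.map_le_range hz), hA hz⟩
  -- Fitting decomposition: choose a good exponent M ≥ 1
  obtain ⟨N, hN⟩ := Filter.eventually_atTop.mp <|
    (L.eventually_isCompl_ker_pow_range_pow.and
      (L.eventually_iSup_ker_pow_eq.and L.eventually_iInf_range_pow_eq))
  set M := max N 1 with hMdef
  obtain ⟨hcompl, hker, hrange⟩ := hN M (le_max_left _ _)
  obtain ⟨_, _, hrange'⟩ := hN (M + 1) (le_trans (le_max_left _ _) (Nat.le_succ _))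
  have hM1 : 1 ≤ M := le_max_right _ _
  -- V0 = ker (L ^ M)
  have hV0eq : V0 = LinearMap.ker (L ^ M) := by
    ext x
    rw [hV0, ← hker]
    constructor
    · rintro ⟨n, hn⟩
      exact Submodule.mem_iSup_of_mem n (LinearMap.mem_ker.mpr hn)
    · intro hx
      obtain ⟨k, hk⟩ := (Submodule.mem_iSup_of_chain L.iterateKer x).mp hx
      exact ⟨k, hk⟩
  have hrr : LinearMap.range (L ^ M) = LinearMap.range (L ^ (M + 1)) := by
    rw [← hrange, ← hrange']
  have hdisj : ∀ x, x ∈ LinearMap.ker (L ^ M) → x ∈ LinearMap.range (L ^ M) → x = 0 := by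
    intro x h1 h2
    exact Submodule.disjoint_def.mp hcompl.disjoint x h1 h2
  have hker_le : ∀ x, L x = 0 → (L ^ M) x = 0 := by
    intro x hx
    obtain ⟨k, hk⟩ := Nat.exists_eq_add_of_le hM1
    rw [hk, add_comm 1 k, pow_succ, Module.End.mul_apply, hx, map_zero]
  -- d preserves range (L ^ M) and ker (L ^ M)
  have hd_range : ∀ x, x ∈ LinearMap.range (L ^ M) → d x ∈ LinearMap.range (L ^ M) := by
    rintro _ ⟨y, rfl⟩; exact ⟨d y, (hpow M y).symm⟩
  have hd_ker : ∀ x, (L ^ M) x = 0 → (L ^ M) (d x) = 0 := by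
    intro x hx
    rw [← hpow, hx, map_zero]
  -- claim C
  have hC : LinearMap.ker d = (LinearMap.ker d ⊓ V0) ⊔ LinearMap.range d := by
    apply le_antisymm
    · intro x hx
      have hxd : d x = 0 := hx
      obtain ⟨x₀, hx₀, w, hw, rfl⟩ : ∃ x₀ ∈ LinearMap.ker (L ^ M),
          ∃ w ∈ LinearMap.range (L ^ M), x₀ + w = x := by
        refine Submodule.mem_sup.mp ?_
        rw [hcompl.sup_eq_top]; trivial
      have hdx0 : (L ^ M) (d x₀) = 0 := hd_ker _ (LinearMap.mem_ker.mp hx₀)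
      have hdw : d w ∈ LinearMap.range (L ^ M) := hd_range _ hw
      have hsum : d x₀ + d w = 0 := by rw [← map_add]; exact hxd
      have hdx0eq : d x₀ = -(d w) := eq_neg_of_add_eq_zero_left hsum
      have hdx0z : d x₀ = 0 := hdisj _ (LinearMap.mem_ker.mpr hdx0) (by
        rw [hdx0eq]; exact Submodule.neg_mem _ hdw)
      have hdwz : d w = 0 := by
        have := hdx0eq; rw [hdx0z] at this
        exact (neg_eq_zero.mp this.symm)
      -- w ∈ range d
      have hwrange : w ∈ LinearMap.range d := by
        have hw' : w ∈ LinearMap.range (L ^ (M + 1)) := hrr ▸ hw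
        obtain ⟨y, hy⟩ := hw'
        set u := (L ^ M) y with hu
        have hLu : L u = w := by
          rw [hu, ← Module.End.mul_apply L (L ^ M) y, ← pow_succ', hy]
        have hdu_range : d u ∈ LinearMap.range (L ^ M) := ⟨d y, (hpow M y).symm⟩
        have hdu_kerL : L (d u) = 0 := by
          rw [← hcomm, hLu, hdwz]
        have hduz : d u = 0 := hdisj _ (LinearMap.mem_ker.mpr (hker_le _ hdu_kerL)) hdu_range
        refine ⟨e u, ?_⟩
        have : L u = d (e u) + e (d u) := by
          simp [hL]
        rw [hduz, map_zero, add_zero] at this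
        rw [← this, hLu]
      exact Submodule.mem_sup.mpr ⟨x₀, ⟨hdx0z, hV0eq ▸ hx₀⟩, w, hwrange, rfl⟩
    · exact sup_le inf_le_left hrange_ker
  refine ⟨hA, hB, hC, le_antisymm ?_ ?_⟩
  · rintro z ⟨⟨hzker, hzV0⟩, x, rfl⟩
    obtain ⟨x₀, hx₀, x₁, hx₁, rfl⟩ : ∃ x₀ ∈ LinearMap.ker (L ^ M),
        ∃ x₁ ∈ LinearMap.range (L ^ M), x₀ + x₁ = x := by
      refine Submodule.mem_sup.mp ?_
      rw [hcompl.sup_eq_top]; trivial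
    have hdx1 : d x₁ ∈ LinearMap.range (L ^ M) := hd_range _ hx₁
    have hdx0 : (L ^ M) (d x₀) = 0 := hd_ker _ (LinearMap.mem_ker.mp hx₀)
    have hz : (L ^ M) (d (x₀ + x₁)) = 0 := by
      rw [hV0eq] at hzV0; exact LinearMap.mem_ker.mp hzV0
    have hdx1ker : (L ^ M) (d x₁) = 0 := by
      have : d x₁ = d (x₀ + x₁) - d x₀ := by rw [map_add]; abel
      rw [this, map_sub, hz, hdx0, sub_zero]
    have hdx1z : d x₁ = 0 := hdisj _ (LinearMap.mem_ker.mpr hdx1ker) hdx1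
    have : d (x₀ + x₁) = d x₀ := by rw [map_add, hdx1z, add_zero]
    exact ⟨x₀, hV0eq ▸ hx₀, this.symm⟩
  · exact le_inf hB (LinearMap.map_le_range)
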